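/- Every graph in the family T' of order n is diameter-2-critical and has exactly 2n − 4 edges. -/

import Mathlib

variable {V : Type*}

/-- A graph has diameter at most 2: every two vertices are joined by a walk of length ≤ 2. -/
def DiamAtMostTwo (G : SimpleGraph V) : Prop :=
  ∀ x y : V, ∃ w : G.Walk x y, w.length ≤ 2

/-- A graph is diameter-2-critical: its diameter is 2 and deleting any edge increases it. -/
def IsD2C (G : SimpleGraph V) : Prop :=
  DiamAtMostTwo G ∧ (∃ x y : V, x ≠ y ∧ ¬ G.Adj x y) ∧
    ∀ e ∈ G.edgeSet, ¬ DiamAtMostTwo (G.deleteEdges {e})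

/-- `uv` is a dominating edge: every vertex is `u`, `v`, or adjacent to one of them. -/
def IsDominatingEdge (G : SimpleGraph V) (u v : V) : Prop :=
  G.Adj u v ∧ ∀ x : V, x = u ∨ x = v ∨ G.Adj u x ∨ G.Adj v x

/-- `e` is critical for the pair `{x,y}`: `x ≠ y`, they are at distance at most 2,
and every walk of length at most 2 from `x` to `y` uses `e`. -/
def CriticalFor (G : SimpleGraph V) (e : Sym2 V) (x y : V) : Prop :=
  x ≠ y ∧ (∃ w : G.Walk x y, w.length ≤ 2) ∧
    ∀ w : G.Walk x y, w.length ≤ 2 → e ∈ w.edges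

/-- `P_uv`: vertices `x ∉ {u,v}` such that `uv` is critical for `{x,v}` or `{x,u}`. -/
def Puv (G : SimpleGraph V) (u v : V) : Set V :=
  {x | x ≠ u ∧ x ≠ v ∧ (CriticalFor G s(u, v) x v ∨ CriticalFor G s(u, v) x u)}

/-- `S_uv`: common neighbours of `u` and `v`. -/
def Suv (G : SimpleGraph V) (u v : V) : Set V :=
  {x | G.Adj u x ∧ G.Adj v x}

/-- `S_w = N(w) \ (P_uv ∪ S_uv ∪ {w'})`, where `{w, w'} = {u, v}`. -/
def Sside (G : SimpleGraph V) (u v w w' : V) : Set V :=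
  G.neighborSet w \ (Puv G u v ∪ Suv G u v ∪ {w'})

/-- The set `X = {v} ∪ S_u ∪ P_uv ∪ S_uv`. -/
def Xset (G : SimpleGraph V) (u v : V) : Set V :=
  {v} ∪ Sside G u v u v ∪ Puv G u v ∪ Suv G u v

/-- The set `Y = {u} ∪ S_v`. -/
def Yset (G : SimpleGraph V) (u v : V) : Set V :=
  {u} ∪ Sside G u v v u

/-- An edge of `G` with both endpoints in `X` or both endpoints in `Y`. -/
def InnerEdge (G : SimpleGraph V) (u v : V) (e : Sym2 V) : Prop :=
  e ∈ G.edgeSet ∧ ((∀ a ∈ e, a ∈ Xset G u v) ∨ (∀ a ∈ e, a ∈ Yset G u v))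

/-- An edge-assignment for `(G, uv)`: an injective map sending each edge `e` inside `X`
or inside `Y` to a non-adjacent pair `{b,c}` with one vertex in `X` and one in `Y`,
where `b` is an endpoint of `e`, `c` lies in the part not containing `e`, and `e` is
critical for `{b,c}`. -/
def IsEdgeAssignment (G : SimpleGraph V) (u v : V) (f : Sym2 V → Sym2 V) : Prop :=
  Set.InjOn f {e | InnerEdge G u v e} ∧
    ∀ e, InnerEdge G u v e →
      ∃ b c, b ∈ e ∧ ¬ G.Adj b c ∧ f e = s(b, c) ∧ CriticalFor G e b c ∧
        ((∀ a ∈ e, a ∈ Xset G u v) → b ∈ Xset G u v ∧ c ∈ Yset G u v) ∧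
        ((∀ a ∈ e, a ∈ Yset G u v) → b ∈ Yset G u v ∧ c ∈ Xset G u v)

/-- The set of `f`-free pairs: non-adjacent pairs `{b,c}` with `b ∈ X`, `c ∈ Y`,
not in the image of `f`. -/
def freeSet (G : SimpleGraph V) (u v : V) (f : Sym2 V → Sym2 V) : Set (Sym2 V) :=
  {p | (∃ b c, b ∈ Xset G u v ∧ c ∈ Yset G u v ∧ ¬ G.Adj b c ∧ p = s(b, c)) ∧
    ∀ e, InnerEdge G u v e → f e ≠ p}

/-- The `f`-orientation: an edge `ab` inside `S_u` or inside `S_v` is oriented from `a`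
to `b` whenever `f(ab) = {b,c}`, i.e. `b` belongs to the image pair and `a` does not. -/
def FOrient (G : SimpleGraph V) (u v : V) (f : Sym2 V → Sym2 V) (a b : V) : Prop :=
  G.Adj a b ∧
    ((a ∈ Sside G u v u v ∧ b ∈ Sside G u v u v) ∨
      (a ∈ Sside G u v v u ∧ b ∈ Sside G u v v u)) ∧
    b ∈ f s(a, b) ∧ a ∉ f s(a, b)

/-- The graph `H₅`: vertices `u,v,p,q,r,s = 0,1,2,3,4,5`, edges
`uv, up, uq, us, vr, vs, pq, qr`. -/
def H5 : SimpleGraph (Fin 6) :=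
  SimpleGraph.fromEdgeSet {s(0, 1), s(0, 2), s(0, 3), s(0, 5), s(1, 4), s(1, 5), s(2, 3), s(3, 4)}

/-- The vertex type of the expanded graph `T`: the vertices `u`, `v`, the vertices
`b₁, …, b_k`, the classes of twins of `a₁, …, a_k` (of sizes `m 1, …, m k`), and the
class of twins of `w` (of size `mw`, possibly zero). -/
abbrev TVert (k : ℕ) (m : Fin k → ℕ) (mw : ℕ) : Type :=
  (Unit ⊕ Unit) ⊕ (Fin k ⊕ ((Σ i : Fin k, Fin (m i)) ⊕ Fin mw))

/-- The adjacency-generating relation: `u` is adjacent to every `aᵢⱼ`, every `bᵢ` and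
every `wⱼ`; `v` is adjacent to every `bᵢ` and every `wⱼ`; and `aᵢⱼ` is adjacent to
`bᵢ`. -/
def Trel (k : ℕ) (m : Fin k → ℕ) (mw : ℕ) : TVert k m mw → TVert k m mw → Prop
  | Sum.inl (Sum.inl _), Sum.inr (Sum.inl _) => True
  | Sum.inl (Sum.inl _), Sum.inr (Sum.inr (Sum.inl _)) => True
  | Sum.inl (Sum.inl _), Sum.inr (Sum.inr (Sum.inr _)) => True
  | Sum.inl (Sum.inr _), Sum.inr (Sum.inl _) => True
  | Sum.inl (Sum.inr _), Sum.inr (Sum.inr (Sum.inr _)) => True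
  | Sum.inr (Sum.inr (Sum.inl ⟨i, _⟩)), Sum.inr (Sum.inl i') => i = i'
  | _, _ => False

/-- A member of the family `T'`: obtained from `T_{2k+2}` (when `mw = 0`) or `T_{2k+3}`
(when `mw ≥ 1`) by expanding each `aᵢ` into `m i ≥ 1` twins and `w` into `mw` twins. -/
def Tgraph (k : ℕ) (m : Fin k → ℕ) (mw : ℕ) : SimpleGraph (TVert k m mw) :=
  SimpleGraph.fromRel (Trel k m mw)


section AuxProofs

open SimpleGraph

/-- Every walk of length at most 2 between distinct `x`, `y` uses `e`, provided `e`
matches the direct edge and every middle vertex. -/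
lemma crit_gen {G : SimpleGraph V} {x y : V} {e : Sym2 V} (hxy : x ≠ y)
    (h1 : G.Adj x y → e = s(x, y))
    (h2 : ∀ z, G.Adj x z → G.Adj z y → e = s(x, z) ∨ e = s(z, y)) :
    ∀ w : G.Walk x y, w.length ≤ 2 → e ∈ w.edges := by
  intro w hw
  cases w with
  | nil => exact absurd rfl hxy
  | @cons _ c _ h p =>
    cases p with
    | nil => simp [h1 h]
    | @cons _ d _ h' q =>
      have hq : q.length = 0 := by
        simp only [SimpleGraph.Walk.length_cons] at hw; omega
      obtain rfl := SimpleGraph.Walk.eq_of_length_eq_zero hq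
      rcases h2 c h h' with he | he <;> simp [he]

lemma not_diam_deleteEdges {G : SimpleGraph V} {e : Sym2 V} {x y : V} (hxy : x ≠ y)
    (hc : ∀ w : G.Walk x y, w.length ≤ 2 → e ∈ w.edges) :
    ¬ DiamAtMostTwo (G.deleteEdges {e}) := by
  intro h
  obtain ⟨w, hw⟩ := h x y
  have hsub : ∀ d ∈ w.edges, d ∈ G.edgeSet := by
    intro d hd
    have := w.edges_subset_edgeSet hd
    rw [SimpleGraph.edgeSet_deleteEdges] at this
    exact this.1
  have he : e ∈ w.edges := by
    have := hc (w.transfer G hsub) (by rwa [SimpleGraph.Walk.length_transfer])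
    rwa [SimpleGraph.Walk.edges_transfer] at this
  have := w.edges_subset_edgeSet he
  rw [SimpleGraph.edgeSet_deleteEdges] at this
  exact this.2 rfl

lemma diam_iso {W : Type*} {G : SimpleGraph V} {H : SimpleGraph W} (phi : G ≃g H)
    (h : DiamAtMostTwo H) : DiamAtMostTwo G := by
  intro x y
  obtain ⟨w, hw⟩ := h (phi x) (phi y)
  refine ⟨(w.map phi.symm.toHom).copy (phi.symm_apply_apply x) (phi.symm_apply_apply y), ?_⟩
  rwa [SimpleGraph.Walk.length_copy, SimpleGraph.Walk.length_map]

lemma isD2C_iso {W : Type*} {G : SimpleGraph V} {H : SimpleGraph W} (phi : G ≃g H)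
    (h : IsD2C H) : IsD2C G := by
  obtain ⟨hd, ⟨a, b, hab, hnadj⟩, hcrit⟩ := h
  refine ⟨diam_iso phi hd, ⟨phi.symm a, phi.symm b, ?_, ?_⟩, ?_⟩
  · intro hc
    exact hab (phi.symm.toEquiv.injective hc)
  · intro hc
    apply hnadj
    have h2 := phi.map_adj_iff.2 hc
    rwa [phi.apply_symm_apply, phi.apply_symm_apply] at h2
  · intro e he hdiam
    have he' : Sym2.map phi e ∈ H.edgeSet := phi.map_mem_edgeSet_iff.2 he
    refine hcrit (Sym2.map phi e) he' ?_
    intro x y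
    obtain ⟨w, hw⟩ := hdiam (phi.symm x) (phi.symm y)
    let psi : G.deleteEdges {e} →g H.deleteEdges {Sym2.map phi e} :=
      { toFun := phi
        map_rel' := by
          intro p q hpq
          rw [SimpleGraph.deleteEdges_adj] at hpq ⊢
          refine ⟨phi.map_adj_iff.2 hpq.1, ?_⟩
          intro hc
          apply hpq.2
          rw [Set.mem_singleton_iff] at hc ⊢
          have : Sym2.map phi s(p, q) = Sym2.map phi e := by
            rwa [Sym2.map_pair_eq]
          exact Sym2.map.injective phi.toEquiv.injective this }
    refine ⟨(w.map psi).copy (phi.apply_symm_apply x) (phi.apply_symm_apply y), ?_⟩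
    rwa [SimpleGraph.Walk.length_copy, SimpleGraph.Walk.length_map]

end AuxProofs

section TProofs

open SimpleGraph

variable {k : ℕ} {m : Fin k → ℕ} {mw : ℕ}

def uuT : TVert k m mw := Sum.inl (Sum.inl ())
def vvT : TVert k m mw := Sum.inl (Sum.inr ())
def bbT (i : Fin k) : TVert k m mw := Sum.inr (Sum.inl i)
def aaT (i : Fin k) (j : Fin (m i)) : TVert k m mw := Sum.inr (Sum.inr (Sum.inl ⟨i, j⟩))
def wwT (j : Fin mw) : TVert k m mw := Sum.inr (Sum.inr (Sum.inr j))

lemma tadj_iff (x y : TVert k m mw) :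
    (Tgraph k m mw).Adj x y ↔ x ≠ y ∧ (Trel k m mw x y ∨ Trel k m mw y x) :=
  SimpleGraph.fromRel_adj _ _ _

lemma adj_uu_inr (t) : (Tgraph k m mw).Adj uuT (Sum.inr t) := by
  rw [tadj_iff]
  exact ⟨by simp [uuT], Or.inl (by rcases t with i | s | j <;> trivial)⟩

lemma adj_uu_bb (i : Fin k) : (Tgraph k m mw).Adj uuT (bbT i) := adj_uu_inr _
lemma adj_uu_aa (i : Fin k) (j : Fin (m i)) : (Tgraph k m mw).Adj uuT (aaT i j) := adj_uu_inr _
lemma adj_uu_ww (j : Fin mw) : (Tgraph k m mw).Adj uuT (wwT j) := adj_uu_inr _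

lemma adj_vv_bb (i : Fin k) : (Tgraph k m mw).Adj vvT (bbT i) := by
  rw [tadj_iff]; exact ⟨by simp [vvT, bbT], Or.inl trivial⟩

lemma adj_vv_ww (j : Fin mw) : (Tgraph k m mw).Adj vvT (wwT j) := by
  rw [tadj_iff]; exact ⟨by simp [vvT, wwT], Or.inl trivial⟩

lemma adj_aa_bb (i : Fin k) (j : Fin (m i)) : (Tgraph k m mw).Adj (aaT i j) (bbT i) := by
  rw [tadj_iff]; exact ⟨by simp [aaT, bbT], Or.inl rfl⟩

lemma not_adj_uu_vv : ¬ (Tgraph k m mw).Adj uuT vvT := by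
  rw [tadj_iff]
  rintro ⟨-, h | h⟩ <;> exact h

lemma not_adj_bb_bb (i i' : Fin k) : ¬ (Tgraph k m mw).Adj (bbT i) (bbT i') := by
  rw [tadj_iff]
  rintro ⟨-, h | h⟩ <;> exact h

lemma not_adj_vv_aa (i : Fin k) (j : Fin (m i)) : ¬ (Tgraph k m mw).Adj vvT (aaT i j) := by
  rw [tadj_iff]
  rintro ⟨-, h | h⟩ <;> exact h

lemma adj_aa_iff (i : Fin k) (j : Fin (m i)) (x : TVert k m mw) :
    (Tgraph k m mw).Adj (aaT i j) x ↔ x = uuT ∨ x = bbT i := by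
  rw [tadj_iff]
  rcases x with (⟨⟩ | ⟨⟩) | (i' | ⟨i', j'⟩ | j') <;>
    simp [Trel, uuT, vvT, aaT, bbT, wwT, eq_comm]

lemma adj_ww_iff (j : Fin mw) (x : TVert k m mw) :
    (Tgraph k m mw).Adj (wwT j) x ↔ x = uuT ∨ x = vvT := by
  rw [tadj_iff]
  rcases x with (⟨⟩ | ⟨⟩) | (i' | ⟨i', j'⟩ | j') <;>
    simp [Trel, uuT, vvT, aaT, bbT, wwT, eq_comm]

lemma diamT (hk : 2 ≤ k) : DiamAtMostTwo (Tgraph k m mw) := by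
  have i0 : Fin k := ⟨0, by omega⟩
  have w1 : ∀ {x y : TVert k m mw}, (Tgraph k m mw).Adj x y →
      ∃ w : (Tgraph k m mw).Walk x y, w.length ≤ 2 := fun h => ⟨h.toWalk, by simp⟩
  have w2 : ∀ {x y : TVert k m mw} (z : TVert k m mw),
      (Tgraph k m mw).Adj x z → (Tgraph k m mw).Adj z y →
      ∃ w : (Tgraph k m mw).Walk x y, w.length ≤ 2 :=
    fun z h1 h2 => ⟨SimpleGraph.Walk.cons h1 (SimpleGraph.Walk.cons h2 SimpleGraph.Walk.nil), by simp⟩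
  intro x y
  rcases x with (⟨⟩ | ⟨⟩) | (i | ⟨i, j⟩ | j) <;> rcases y with (⟨⟩ | ⟨⟩) | (i' | ⟨i', j'⟩ | j')
  · exact ⟨SimpleGraph.Walk.nil, by simp⟩
  · exact w2 (bbT i0) (adj_uu_bb i0) (adj_vv_bb i0).symm
  · exact w1 (adj_uu_bb i')
  · exact w1 (adj_uu_aa i' j')
  · exact w1 (adj_uu_ww j')
  · exact w2 (bbT i0) (adj_vv_bb i0) (adj_uu_bb i0).symm
  · exact ⟨SimpleGraph.Walk.nil, by simp⟩
  · exact w1 (adj_vv_bb i')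
  · exact w2 (bbT i') (adj_vv_bb i') (adj_aa_bb i' j').symm
  · exact w1 (adj_vv_ww j')
  · exact w1 (adj_uu_bb i).symm
  · exact w1 (adj_vv_bb i).symm
  · exact w2 uuT (adj_uu_bb i).symm (adj_uu_bb i')
  · exact w2 uuT (adj_uu_bb i).symm (adj_uu_aa i' j')
  · exact w2 uuT (adj_uu_bb i).symm (adj_uu_ww j')
  · exact w1 (adj_uu_aa i j).symm
  · exact w2 (bbT i) (adj_aa_bb i j) (adj_vv_bb i).symm
  · exact w2 uuT (adj_uu_aa i j).symm (adj_uu_bb i')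
  · exact w2 uuT (adj_uu_aa i j).symm (adj_uu_aa i' j')
  · exact w2 uuT (adj_uu_aa i j).symm (adj_uu_ww j')
  · exact w1 (adj_uu_ww j).symm
  · exact w1 (adj_vv_ww j).symm
  · exact w2 uuT (adj_uu_ww j).symm (adj_uu_bb i')
  · exact w2 uuT (adj_uu_ww j).symm (adj_uu_aa i' j')
  · exact w2 uuT (adj_uu_ww j).symm (adj_uu_ww j')

def otherT (hk : 2 ≤ k) (i : Fin k) : Fin k :=
  if i = ⟨0, by omega⟩ then ⟨1, by omega⟩ else ⟨0, by omega⟩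

lemma otherT_ne (hk : 2 ≤ k) (i : Fin k) : otherT hk i ≠ i := by
  unfold otherT
  split
  · next h => subst h; simp
  · next h => exact fun hc => h hc.symm

/-- critical pair for edge u-b i : (a_{i'} 0, b i). -/
lemma crit_ub (hk : 2 ≤ k) (hm : ∀ i, 1 ≤ m i) (i : Fin k) :
    ¬ DiamAtMostTwo ((Tgraph k m mw).deleteEdges {s(uuT, bbT i)}) := by
  set i' := otherT hk i with hi'
  have hne : (aaT i' ⟨0, hm i'⟩ : TVert k m mw) ≠ bbT i := by simp [aaT, bbT]
  refine not_diam_deleteEdges hne (crit_gen hne ?_ ?_)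
  · intro h
    rw [adj_aa_iff] at h
    rcases h with h | h
    · exact absurd h (by simp [bbT, uuT])
    · exact absurd (show otherT hk i = i by simpa [bbT] using h.symm) (otherT_ne hk i)
  · intro z h1 h2
    rw [adj_aa_iff] at h1
    rcases h1 with rfl | rfl
    · exact Or.inr rfl
    · exact absurd h2 (not_adj_bb_bb _ _)

/-- critical pair for edge u-a i j : (a i j, b i'). -/
lemma crit_ua (hk : 2 ≤ k) (i : Fin k) (j : Fin (m i)) :
    ¬ DiamAtMostTwo ((Tgraph k m mw).deleteEdges {s(uuT, aaT i j)}) := by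
  set i' := otherT hk i with hi'
  have hne : (aaT i j : TVert k m mw) ≠ bbT i' := by simp [aaT, bbT]
  refine not_diam_deleteEdges hne (crit_gen hne ?_ ?_)
  · intro h
    rw [adj_aa_iff] at h
    rcases h with h | h
    · exact absurd h (by simp [bbT, uuT])
    · exact absurd (show otherT hk i = i by simpa [bbT] using h) (otherT_ne hk i)
  · intro z h1 h2
    rw [adj_aa_iff] at h1
    rcases h1 with rfl | rfl
    · exact Or.inl Sym2.eq_swap
    · exact absurd h2 (not_adj_bb_bb _ _)

/-- critical pair for edge u-w j : (w j, a i0 0). -/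
lemma crit_uw (hk : 2 ≤ k) (hm : ∀ i, 1 ≤ m i) (j : Fin mw) :
    ¬ DiamAtMostTwo ((Tgraph k m mw).deleteEdges {s(uuT, wwT j)}) := by
  have i0 : Fin k := ⟨0, by omega⟩
  have hne : (wwT j : TVert k m mw) ≠ aaT i0 ⟨0, hm i0⟩ := by simp [aaT, wwT]
  refine not_diam_deleteEdges hne (crit_gen hne ?_ ?_)
  · intro h
    rw [adj_ww_iff] at h
    rcases h with h | h <;> simp [aaT, uuT, vvT] at h
  · intro z h1 h2
    rw [adj_ww_iff] at h1
    rcases h1 with rfl | rfl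
    · exact Or.inl Sym2.eq_swap
    · exact absurd h2 (not_adj_vv_aa _ _)

/-- critical pair for edge v-b i : (a i 0, v). -/
lemma crit_vb (hm : ∀ i, 1 ≤ m i) (i : Fin k) :
    ¬ DiamAtMostTwo ((Tgraph k m mw).deleteEdges {s(vvT, bbT i)}) := by
  have hne : (aaT i ⟨0, hm i⟩ : TVert k m mw) ≠ vvT := by simp [aaT, vvT]
  refine not_diam_deleteEdges hne (crit_gen hne ?_ ?_)
  · intro h
    rw [adj_aa_iff] at h
    rcases h with h | h <;> simp [uuT, vvT, bbT] at h
  · intro z h1 h2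
    rw [adj_aa_iff] at h1
    rcases h1 with rfl | rfl
    · exact absurd h2 not_adj_uu_vv
    · exact Or.inr Sym2.eq_swap

/-- critical pair for edge a i j - b i : (a i j, v). -/
lemma crit_ab (i : Fin k) (j : Fin (m i)) :
    ¬ DiamAtMostTwo ((Tgraph k m mw).deleteEdges {s(aaT i j, bbT i)}) := by
  have hne : (aaT i j : TVert k m mw) ≠ vvT := by simp [aaT, vvT]
  refine not_diam_deleteEdges hne (crit_gen hne ?_ ?_)
  · intro h
    rw [adj_aa_iff] at h
    rcases h with h | h <;> simp [uuT, vvT, bbT] at h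
  · intro z h1 h2
    rw [adj_aa_iff] at h1
    rcases h1 with rfl | rfl
    · exact absurd h2 not_adj_uu_vv
    · exact Or.inl rfl

/-- critical pair for edge v-w j : (w j, v). -/
lemma crit_vw (j : Fin mw) :
    ¬ DiamAtMostTwo ((Tgraph k m mw).deleteEdges {s(vvT, wwT j)}) := by
  have hne : (wwT j : TVert k m mw) ≠ vvT := by simp [wwT, vvT]
  refine not_diam_deleteEdges hne (crit_gen hne ?_ ?_)
  · intro _
    exact Sym2.eq_swap.symm
  · intro z h1 h2
    rw [adj_ww_iff] at h1
    rcases h1 with rfl | rfl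
    · exact absurd h2 not_adj_uu_vv
    · exact absurd h2 (Tgraph k m mw).irrefl

lemma critT (hk : 2 ≤ k) (hm : ∀ i, 1 ≤ m i) :
    ∀ e ∈ (Tgraph k m mw).edgeSet, ¬ DiamAtMostTwo ((Tgraph k m mw).deleteEdges {e}) := by
  intro e
  induction e using Sym2.ind with
  | _ x y =>
    intro he
    rw [SimpleGraph.mem_edgeSet, tadj_iff] at he
    obtain ⟨hne, hrel⟩ := he
    rcases x with (⟨⟩ | ⟨⟩) | (i | ⟨i, j⟩ | j) <;>
      rcases y with (⟨⟩ | ⟨⟩) | (i' | ⟨i', j'⟩ | j')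
    · exact absurd rfl hne
    · exact absurd hrel (by rintro (h | h) <;> exact h)
    · exact crit_ub hk hm i'
    · exact crit_ua hk i' j'
    · exact crit_uw hk hm j'
    · exact absurd hrel (by rintro (h | h) <;> exact h)
    · exact absurd rfl hne
    · exact crit_vb hm i'
    · exact absurd hrel (by rintro (h | h) <;> exact h)
    · exact crit_vw j'
    · rw [Sym2.eq_swap]; exact crit_ub hk hm i
    · rw [Sym2.eq_swap]; exact crit_vb hm i
    · exact absurd hrel (by rintro (h | h) <;> exact h)
    · obtain rfl : i' = i := hrel.resolve_left fun h => h
      rw [Sym2.eq_swap]; exact crit_ab i' j'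
    · exact absurd hrel (by rintro (h | h) <;> exact h)
    · rw [Sym2.eq_swap]; exact crit_ua hk i j
    · exact absurd hrel (by rintro (h | h) <;> exact h)
    · obtain rfl : i = i' := hrel.resolve_right fun h => h
      exact crit_ab i j
    · exact absurd hrel (by rintro (h | h) <;> exact h)
    · exact absurd hrel (by rintro (h | h) <;> exact h)
    · rw [Sym2.eq_swap]; exact crit_uw hk hm j
    · rw [Sym2.eq_swap]; exact crit_vw j
    · exact absurd hrel (by rintro (h | h) <;> exact h)
    · exact absurd hrel (by rintro (h | h) <;> exact h)
    · exact absurd hrel (by rintro (h | h) <;> exact h)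

def edgeIndex (k : ℕ) (m : Fin k → ℕ) (mw : ℕ) : Type :=
  (Fin k ⊕ ((Σ i : Fin k, Fin (m i)) ⊕ Fin mw)) ⊕ (Fin k ⊕ ((Σ i : Fin k, Fin (m i)) ⊕ Fin mw))

instance : Fintype (edgeIndex k m mw) := by unfold edgeIndex; infer_instance

def FE : edgeIndex k m mw → Sym2 (TVert k m mw)
  | Sum.inl t => s(uuT, Sum.inr t)
  | Sum.inr (Sum.inl i) => s(vvT, bbT i)
  | Sum.inr (Sum.inr (Sum.inl ⟨i, j⟩)) => s(aaT i j, bbT i)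
  | Sum.inr (Sum.inr (Sum.inr j)) => s(vvT, wwT j)

lemma FE_inj : Function.Injective (FE (k := k) (m := m) (mw := mw)) := by
  intro p q h
  rcases p with t | (i | ⟨i, j⟩ | j) <;> rcases q with t' | (i' | ⟨i', j'⟩ | j') <;>
    simp_all [FE, Sym2.eq_iff, uuT, vvT, aaT, bbT, wwT] <;>
    first | rfl | (obtain ⟨⟨rfl, hj⟩, -⟩ := h; rw [eq_of_heq hj])

lemma edgeSetT : (Tgraph k m mw).edgeSet = Set.range (FE (k := k) (m := m) (mw := mw)) := by
  ext e
  induction e using Sym2.ind with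
  | _ x y =>
    constructor
    · intro he
      rw [SimpleGraph.mem_edgeSet, tadj_iff] at he
      obtain ⟨hne, hrel⟩ := he
      rcases x with (⟨⟩ | ⟨⟩) | (i | ⟨i, j⟩ | j) <;>
        rcases y with (⟨⟩ | ⟨⟩) | (i' | ⟨i', j'⟩ | j') <;>
        first
        | (exfalso; rcases hrel with h | h <;> exact h)
        | exact absurd rfl hne
        | exact ⟨Sum.inl _, rfl⟩
        | exact ⟨Sum.inr (Sum.inl _), rfl⟩
        | exact ⟨Sum.inr (Sum.inr (Sum.inr _)), rfl⟩
        | (rw [Sym2.eq_swap]; first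
            | exact ⟨Sum.inl _, rfl⟩
            | exact ⟨Sum.inr (Sum.inl _), rfl⟩
            | exact ⟨Sum.inr (Sum.inr (Sum.inr _)), rfl⟩)
        | (obtain rfl : i = i' := by
              rcases hrel with h | h
              · exact h
              · exact h.elim
           exact ⟨Sum.inr (Sum.inr (Sum.inl ⟨i, j⟩)), rfl⟩)
        | (obtain rfl : i' = i := by
              rcases hrel with h | h
              · exact h.elim
              · exact h
           rw [Sym2.eq_swap]
           exact ⟨Sum.inr (Sum.inr (Sum.inl ⟨i', j'⟩)), rfl⟩)
    · rintro ⟨p, hp⟩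
      rw [← hp]
      rcases p with t | (i | ⟨i, j⟩ | j)
      · exact (SimpleGraph.mem_edgeSet _).2 (adj_uu_inr t)
      · exact (SimpleGraph.mem_edgeSet _).2 (adj_vv_bb i)
      · exact (SimpleGraph.mem_edgeSet _).2 (adj_aa_bb i j)
      · exact (SimpleGraph.mem_edgeSet _).2 (adj_vv_ww j)

lemma countT : (Tgraph k m mw).edgeSet.ncard = 2 * (k + (∑ i, m i) + mw) := by
  rw [edgeSetT, ← Set.image_univ, Set.ncard_image_of_injective _ FE_inj, Set.ncard_univ,
    Nat.card_eq_fintype_card]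
  simp only [edgeIndex, Fintype.card_sum, Fintype.card_sigma, Fintype.card_fin]
  ring

lemma cardTVert : Fintype.card (TVert k m mw) = 2 + k + (∑ i, m i) + mw := by
  simp only [TVert, Fintype.card_sum, Fintype.card_sigma, Fintype.card_fin, Fintype.card_unit]
  ring

end TProofs

/-- every graph in the family `T'` of order `n` is diameter-2-critical and
has exactly `2n − 4` edges. -/
theorem statement18 {V : Type*} [Fintype V] (G : SimpleGraph V)
    (k : ℕ) (hk : 2 ≤ k) (m : Fin k → ℕ) (hm : ∀ i, 1 ≤ m i) (mw : ℕ)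
    (hiso : Nonempty (G ≃g Tgraph k m mw)) :
    IsD2C G ∧ G.edgeSet.ncard = 2 * Fintype.card V - 4 := by
  obtain ⟨phi⟩ := hiso
  have hT : IsD2C (Tgraph k m mw) := by
    refine ⟨diamT hk, ⟨uuT, vvT, by simp [uuT, vvT], not_adj_uu_vv⟩, critT hk hm⟩
  constructor
  · exact isD2C_iso phi hT
  · have h1 : G.edgeSet.ncard = (Tgraph k m mw).edgeSet.ncard := by
      rw [← Nat.card_coe_set_eq, ← Nat.card_coe_set_eq]
      exact Nat.card_congr phi.mapEdgeSet
    have h2 : Fintype.card V = Fintype.card (TVert k m mw) := Fintype.card_congr phi.toEquiv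
    rw [h1, h2, countT, cardTVert]
    omega
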